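/- With f(r) = r² + 1 − μ r^{2−d} (d ≥ 3, μ > 0) and z(r) = ∫_r^∞ dt/f(t), the inverse function r(z) satisfies r(z) = 1/z − z/3 + O(z²) as z → 0⁺. -/

import Mathlib

open Real MeasureTheory Set Filter

lemma aux_sin_lb {x : ℝ} (h0 : 0 < x) (h1 : x ≤ 1/2) : x/2 ≤ Real.sin x := by
  have hb := Real.sin_bound (x := x) (by rw [abs_of_pos h0]; linarith)
  rw [abs_of_pos h0, abs_le] at hb
  have hx2 : x^2 ≤ 1/4 := by nlinarith
  have h3 : x^3 ≤ x/4 := by nlinarith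
  have h4 : x^4 ≤ x/8 := by nlinarith [pow_pos h0 3]
  nlinarith [hb.1, mul_le_mul_of_nonneg_left h4 h0.le]

lemma aux_cot (x : ℝ) (h0 : 0 < x) (h1 : x ≤ 1/2) :
    |Real.cos x / Real.sin x - (1/x - x/3)| ≤ x^2 := by
  have hs := Real.sin_bound (x := x) (by rw [abs_of_pos h0]; linarith)
  have hc := Real.cos_bound (x := x) (by rw [abs_of_pos h0]; linarith)
  rw [abs_of_pos h0, abs_le] at hs hc
  have hsl : x/2 ≤ Real.sin x := aux_sin_lb h0 h1
  have hsp : 0 < Real.sin x := by linarith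
  have hx2 : x^2 ≤ 1/4 := by nlinarith
  have h5 : x^5 ≤ x^4/2 := by nlinarith [pow_pos h0 4]
  have hxnn : (0:ℝ) ≤ x^2 := by positivity
  have hmul1 := mul_le_mul_of_nonneg_left hs.2 hxnn
  have hmul2 := mul_le_mul_of_nonneg_left hs.1 hxnn
  have hmul3 := mul_le_mul_of_nonneg_left hc.2 h0.le
  have hmul4 := mul_le_mul_of_nonneg_left hc.1 h0.le
  have hnum : |x * Real.cos x - Real.sin x * (1 - x^2/3)| ≤ x^4/2 := by
    rw [abs_le]
    constructor <;> nlinarith [pow_pos h0 4, pow_pos h0 5, pow_pos h0 6]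
  have heq : Real.cos x / Real.sin x - (1/x - x/3)
      = (x * Real.cos x - Real.sin x * (1 - x^2/3)) / (x * Real.sin x) := by
    field_simp
  rw [heq, abs_div, abs_of_pos (by positivity : (0:ℝ) < x * Real.sin x)]
  rw [div_le_iff₀ (by positivity)]
  calc |x * Real.cos x - Real.sin x * (1 - x^2/3)| ≤ x^4/2 := hnum
    _ = x^2 * (x * (x/2)) := by ring
    _ ≤ x^2 * (x * Real.sin x) := by nlinarith

lemma aux_cot_sub {a b : ℝ} (ha : Real.sin a ≠ 0) (hb : Real.sin b ≠ 0) :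
    Real.cos a / Real.sin a - Real.cos b / Real.sin b
      = Real.sin (b - a) / (Real.sin a * Real.sin b) := by
  rw [Real.sin_sub]; field_simp

lemma aux_pointwise (d : ℕ) (hd : 3 ≤ d) (μ : ℝ) (hμ : 0 < μ) (t : ℝ)
    (h1 : 1 ≤ t) (hμt : μ ≤ t) :
    t^2 ≤ t^2 + 1 - μ/t^(d-2) ∧
    (t^2 + 1 - μ/t^(d-2))⁻¹ - (1 + t^2)⁻¹ ≤ μ * (t^5)⁻¹ ∧
    0 ≤ (t^2 + 1 - μ/t^(d-2))⁻¹ - (1 + t^2)⁻¹ := by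
  have ht0 : 0 < t := lt_of_lt_of_le one_pos h1
  have hpow : t ≤ t^(d-2) := by
    calc t = t^1 := (pow_one t).symm
    _ ≤ t^(d-2) := pow_le_pow_right₀ h1 (by omega)
  have hpow0 : 0 < t^(d-2) := pow_pos ht0 _
  set c := μ / t^(d-2) with hc
  have hc0 : 0 < c := div_pos hμ hpow0
  have hcle : c ≤ μ / t := hc ▸ div_le_div_of_nonneg_left hμ.le ht0 hpow
  have hc1 : c ≤ 1 := hcle.trans (by rw [div_le_one ht0]; exact hμt)
  have hg : t^2 ≤ t^2 + 1 - c := by linarith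
  have hgpos : 0 < t^2 + 1 - c := lt_of_lt_of_le (by positivity) hg
  have hApos : 0 < 1 + t^2 := by positivity
  refine ⟨hg, ?_, ?_⟩
  · have e : (t^2 + 1 - c)⁻¹ - (1 + t^2)⁻¹ = c / ((t^2 + 1 - c) * (1 + t^2)) := by
      field_simp
      ring
    rw [e]
    have h4 : t^2 * t^2 ≤ (t^2 + 1 - c) * (1 + t^2) := by nlinarith [sq_nonneg t]
    calc c / ((t^2 + 1 - c) * (1 + t^2)) ≤ (μ/t) / (t^2 * t^2) :=
          div_le_div₀ (by positivity) hcle (by positivity) h4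
      _ = μ * (t^5)⁻¹ := by
          rw [div_div, show t * (t^2*t^2) = t^5 by ring, div_eq_mul_inv]
  · have : (1 + t^2)⁻¹ ≤ (t^2 + 1 - c)⁻¹ := by
      apply inv_anti₀ hgpos; linarith
    linarith

lemma aux_z_est (d : ℕ) (hd : 3 ≤ d) (μ : ℝ) (hμ : 0 < μ) (r : ℝ) (h1 : 1 ≤ r) (hμr : μ ≤ r) :
    IntegrableOn (fun t : ℝ => (t^2 + 1 - μ/t^(d-2))⁻¹) (Ioi r) ∧
    π/2 - arctan r ≤ (∫ t in Ioi r, (t^2 + 1 - μ/t^(d-2))⁻¹) ∧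
    (∫ t in Ioi r, (t^2 + 1 - μ/t^(d-2))⁻¹) ≤ π/2 - arctan r + μ * (r^4)⁻¹/4 := by
  have hr0 : (0:ℝ) < r := lt_of_lt_of_le one_pos h1
  have key : ∀ t ∈ Ioi r, t^2 ≤ t^2 + 1 - μ/t^(d-2) ∧
      (t^2 + 1 - μ/t^(d-2))⁻¹ - (1 + t^2)⁻¹ ≤ μ * (t^5)⁻¹ ∧
      0 ≤ (t^2 + 1 - μ/t^(d-2))⁻¹ - (1 + t^2)⁻¹ :=
    fun t ht => aux_pointwise d hd μ hμ t (h1.trans (le_of_lt ht)) (hμr.trans (le_of_lt ht))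
  have hgpos : ∀ t ∈ Ioi r, 0 < t^2 + 1 - μ/t^(d-2) := fun t ht =>
    lt_of_lt_of_le (pow_pos (hr0.trans ht) 2) (key t ht).1
  have hcont : ContinuousOn (fun t : ℝ => (t^2 + 1 - μ/t^(d-2))⁻¹) (Ioi r) := by
    apply ContinuousOn.inv₀
    · apply ContinuousOn.sub (Continuous.continuousOn (by continuity))
      apply ContinuousOn.div continuousOn_const (Continuous.continuousOn (by continuity))
      intro x hx
      exact ne_of_gt (pow_pos (hr0.trans hx) _)
    · exact fun x hx => ne_of_gt (hgpos x hx)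
  have hmeas : AEStronglyMeasurable (fun t : ℝ => (t^2 + 1 - μ/t^(d-2))⁻¹)
      (volume.restrict (Ioi r)) := hcont.aestronglyMeasurable measurableSet_Ioi
  have hpow_eq : ∀ (n : ℕ) (t : ℝ), 0 < t → t ^ (-(n:ℝ)) = (t^n)⁻¹ := by
    intro n t ht
    rw [Real.rpow_neg ht.le, Real.rpow_natCast]
  have hint2 : IntegrableOn (fun t : ℝ => t ^ (-2:ℝ)) (Ioi r) :=
    integrableOn_Ioi_rpow_of_lt (by norm_num) hr0
  have hintg : IntegrableOn (fun t : ℝ => (t^2 + 1 - μ/t^(d-2))⁻¹) (Ioi r) := by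
    apply Integrable.mono' hint2 hmeas
    filter_upwards [ae_restrict_mem measurableSet_Ioi] with t ht
    rw [Real.norm_eq_abs, abs_of_pos (inv_pos.mpr (hgpos t ht)),
      show ((-2:ℝ) = -((2:ℕ):ℝ)) by norm_num, hpow_eq 2 t (hr0.trans ht)]
    exact inv_anti₀ (pow_pos (hr0.trans ht) 2) (key t ht).1
  have hintq : IntegrableOn (fun t : ℝ => (1 + t^2)⁻¹) (Ioi r) :=
    integrable_inv_one_add_sq.integrableOn
  have hinth := hintg.sub hintq
  have hint5 : IntegrableOn (fun t : ℝ => μ * t ^ (-5:ℝ)) (Ioi r) :=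
    (integrableOn_Ioi_rpow_of_lt (by norm_num) hr0).const_mul μ
  have h0le : 0 ≤ ∫ t in Ioi r, ((t^2 + 1 - μ/t^(d-2))⁻¹ - (1 + t^2)⁻¹) :=
    setIntegral_nonneg measurableSet_Ioi (fun t ht => (key t ht).2.2)
  have hle : (∫ t in Ioi r, ((t^2 + 1 - μ/t^(d-2))⁻¹ - (1 + t^2)⁻¹))
      ≤ ∫ t in Ioi r, μ * t ^ (-5:ℝ) := by
    apply setIntegral_mono_on hinth hint5 measurableSet_Ioi
    intro t ht
    rw [show ((-5:ℝ) = -((5:ℕ):ℝ)) by norm_num, hpow_eq 5 t (hr0.trans ht)]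
    exact (key t ht).2.1
  have hi5 : (∫ t in Ioi r, μ * t ^ (-5:ℝ)) = μ * (r^4)⁻¹/4 := by
    rw [MeasureTheory.integral_const_mul, integral_Ioi_rpow_of_lt (by norm_num) hr0]
    rw [show ((-5:ℝ) + 1 = -((4:ℕ):ℝ)) by norm_num, hpow_eq 4 r hr0]
    ring
  have hsub : (∫ t in Ioi r, ((t^2 + 1 - μ/t^(d-2))⁻¹ - (1 + t^2)⁻¹))
      = (∫ t in Ioi r, (t^2 + 1 - μ/t^(d-2))⁻¹) - ∫ t in Ioi r, (1 + t^2)⁻¹ :=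
    integral_sub hintg hintq
  have hq : (∫ t in Ioi r, (1 + t^2)⁻¹) = π/2 - arctan r := integral_Ioi_inv_one_add_sq
  rw [hsub, hq] at h0le hle
  rw [hi5] at hle
  exact ⟨hintg, by linarith, by linarith⟩

lemma aux_gpos (d : ℕ) (hd : 3 ≤ d) (μ : ℝ) (hμ : 0 < μ) (rp : ℝ) (hrp : 0 < rp)
    (hroot : rp ^ 2 + 1 - μ / rp ^ (d - 2) = 0) {t : ℝ} (ht : rp < t) :
    0 < t ^ 2 + 1 - μ / t ^ (d - 2) := by
  have h1 : rp^2 < t^2 := by nlinarith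
  have h2 : rp^(d-2) < t^(d-2) := pow_lt_pow_left₀ ht hrp.le (by omega)
  have h3 : μ / t^(d-2) < μ / rp^(d-2) := div_lt_div_of_pos_left hμ (pow_pos hrp _) h2
  linarith

set_option maxHeartbeats 1000000 in
/-- With `z(r) = ∫_r^∞ dt/f(t)` the Regge–Wheeler coordinate and `R` its inverse
function on `(0,∞)`, one has `R(z) = 1/z − z/3 + O(z²)` as `z → 0⁺`. -/
theorem stmt_3 (d : ℕ) (hd : 3 ≤ d) (μ : ℝ) (hμ : 0 < μ) (rp : ℝ) (hrp : 0 < rp)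
    (hroot : rp ^ 2 + 1 - μ / rp ^ (d - 2) = 0)
    (huniq : ∀ r : ℝ, 0 < r → r ^ 2 + 1 - μ / r ^ (d - 2) = 0 → r = rp)
    (z : ℝ → ℝ)
    (hz : ∀ r : ℝ, z r = ∫ t in Ioi r, (t ^ 2 + 1 - μ / t ^ (d - 2))⁻¹)
    (R : ℝ → ℝ)
    (hR : ∀ r : ℝ, rp < r → R (z r) = r)
    (hRrange : ∀ x : ℝ, 0 < x → rp < R x ∧ z (R x) = x) :
    ∃ C ε : ℝ, 0 < C ∧ 0 < ε ∧ ∀ x : ℝ, 0 < x → x < ε →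
      |R x - (1 / x - x / 3)| ≤ C * x ^ 2 := by
  set M : ℝ := max rp (max 1 μ) with hM
  have hM1 : (1:ℝ) ≤ M := le_trans (le_max_left 1 μ) (le_max_right _ _)
  have hMμ : μ ≤ M := le_trans (le_max_right 1 μ) (le_max_right _ _)
  have hM0 : (0:ℝ) < M := lt_of_lt_of_le one_pos hM1
  obtain ⟨hintM, hLM, hUM⟩ := aux_z_est d hd μ hμ M hM1 hMμ
  have hzMpos : 0 < z M := by
    rw [hz]
    have hgnn : ∀ᵐ t ∂(volume.restrict (Ioi M)), 0 ≤ (t^2 + 1 - μ/t^(d-2))⁻¹ := by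
      filter_upwards [ae_restrict_mem measurableSet_Ioi] with t ht
      have := (aux_pointwise d hd μ hμ t (hM1.trans (le_of_lt ht)) (hMμ.trans (le_of_lt ht))).1
      have hp : 0 < t^2 + 1 - μ/t^(d-2) := lt_of_lt_of_le (pow_pos (hM0.trans ht) 2) this
      exact (inv_pos.mpr hp).le
    have h1 : (∫ t in Ioc M (M+1), (((M+1):ℝ)^2+1)⁻¹)
        ≤ ∫ t in Ioc M (M+1), (t^2 + 1 - μ/t^(d-2))⁻¹ := by
      apply setIntegral_mono_on
        (integrableOn_const measure_Ioc_lt_top.ne)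
        (hintM.mono_set Ioc_subset_Ioi_self) measurableSet_Ioc
      intro t ht
      obtain ⟨ht1, ht2⟩ := ht
      have hkey := (aux_pointwise d hd μ hμ t (hM1.trans ht1.le) (hMμ.trans ht1.le)).1
      have hgp : 0 < t^2 + 1 - μ/t^(d-2) := lt_of_lt_of_le (pow_pos (hM0.trans ht1) 2) hkey
      have hub : t^2 + 1 - μ/t^(d-2) ≤ (M+1)^2 + 1 := by
        have hcp : 0 < μ / t^(d-2) := div_pos hμ (pow_pos (hM0.trans ht1) _)
        nlinarith [hM0.trans ht1]
      exact inv_anti₀ hgp hub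
    have h2 : (∫ t in Ioc M (M+1), (t^2 + 1 - μ/t^(d-2))⁻¹)
        ≤ ∫ t in Ioi M, (t^2 + 1 - μ/t^(d-2))⁻¹ :=
      setIntegral_mono_set hintM hgnn (HasSubset.Subset.eventuallyLE Ioc_subset_Ioi_self)
    have h3 : (∫ t in Ioc M (M+1), (((M+1):ℝ)^2+1)⁻¹) = (((M+1):ℝ)^2+1)⁻¹ := by
      rw [setIntegral_const, Real.volume_real_Ioc_of_le (by linarith), show M+1-M = 1 by ring,
        one_smul]
    have hc : (0:ℝ) < (((M+1):ℝ)^2+1)⁻¹ := by positivity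
    linarith
  refine ⟨32*μ + 2, min (z M) (min (1/2) (1/(8*μ))), by linarith, 
    lt_min hzMpos (lt_min (by norm_num) (by positivity)), ?_⟩
  intro x hx0 hxε
  obtain ⟨hRrp, hzRx⟩ := hRrange x hx0
  have hRM : M < R x := by
    by_contra hcon
    push_neg at hcon
    have hint : IntegrableOn (fun t : ℝ => (t^2 + 1 - μ/t^(d-2))⁻¹) (Ioi (R x)) := by
      by_contra hni
      have h0 : z (R x) = 0 := by rw [hz]; exact integral_undef hni
      rw [hzRx] at h0; linarith
    have hmono : z M ≤ z (R x) := by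
      rw [hz, hz]
      apply setIntegral_mono_set hint
      · filter_upwards [ae_restrict_mem measurableSet_Ioi] with t ht
        exact (inv_pos.mpr (aux_gpos d hd μ hμ rp hrp hroot (hRrp.trans ht))).le
      · exact HasSubset.Subset.eventuallyLE (Ioi_subset_Ioi hcon)
    rw [hzRx] at hmono
    have : x < z M := lt_of_lt_of_le hxε (min_le_left _ _)
    linarith
  set r := R x with hrdef
  have hr1 : (1:ℝ) ≤ r := hM1.trans hRM.le
  have hrμ : μ ≤ r := hMμ.trans hRM.le
  have hr0 : (0:ℝ) < r := lt_of_lt_of_le one_pos hr1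
  obtain ⟨hint, hL, hU⟩ := aux_z_est d hd μ hμ r hr1 hrμ
  rw [← hz r, hzRx] at hL hU
  have harc : arctan r⁻¹ = π/2 - arctan r := Real.arctan_inv_of_pos hr0
  rw [← harc] at hL hU
  have hx12 : x ≤ 1/2 :=
    le_of_lt (lt_of_lt_of_le hxε ((min_le_right _ _).trans (min_le_left _ _)))
  have hx8 : x ≤ 1/(8*μ) :=
    le_of_lt (lt_of_lt_of_le hxε ((min_le_right _ _).trans (min_le_right _ _)))
  have hπ : (1:ℝ)/2 < π/2 := by linarith [Real.pi_gt_three]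
  have hxIoo : x ∈ Ioo (-(π/2)) (π/2) := ⟨by linarith, by linarith⟩
  have hsinx := aux_sin_lb hx0 hx12
  have hsinxpos : 0 < Real.sin x := by linarith
  have hcosxpos : 0 < Real.cos x := Real.cos_pos_of_mem_Ioo hxIoo
  have htanx : r⁻¹ ≤ Real.tan x := by
    rw [← Real.tan_arctan r⁻¹]
    exact Real.strictMonoOn_tan.monotoneOn (Real.arctan_mem_Ioo _) hxIoo hL
  have hcotx : Real.cos x / Real.sin x ≤ r := by
    have h := inv_anti₀ (inv_pos.mpr hr0) htanx
    rw [inv_inv] at h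
    calc Real.cos x / Real.sin x = (Real.tan x)⁻¹ := by
          rw [Real.tan_eq_sin_div_cos, inv_div]
      _ ≤ r := h
  have hcot := aux_cot x hx0 hx12
  rw [abs_le] at hcot
  have h1x : (1:ℝ) ≤ 1/(2*x) := by rw [le_div_iff₀ (by positivity)]; linarith
  have hhalf : 1/(2*x) ≤ r := by
    have hq : 1/(2*x) ≤ 1/x - x/3 - x^2 := by
      have e : 1/x - 1/(2*x) = 1/(2*x) := by field_simp; ring
      nlinarith
    linarith [hcot.1, hcotx]
  have hδ : μ * (r^4)⁻¹ / 4 ≤ 4*μ*x^4 := by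
    have h4 : (1/(2*x))^4 ≤ r^4 := pow_le_pow_left₀ (by positivity) hhalf 4
    have h5 : (r^4)⁻¹ ≤ ((1/(2*x))^4)⁻¹ := inv_anti₀ (by positivity) h4
    have h6 : ((1/(2*x))^4)⁻¹ = 16*x^4 := by
      rw [div_pow, one_pow, inv_div]; ring
    rw [h6] at h5
    have := mul_le_mul_of_nonneg_left h5 hμ.le
    linarith
  have hμx : μ * x ≤ 1/8 := by
    have := mul_le_mul_of_nonneg_left hx8 hμ.le
    calc μ * x ≤ μ * (1/(8*μ)) := this
      _ = 1/8 := by field_simp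
  have hδ2 : 4*μ*x^4 ≤ x/2 := by
    have hx2 : x*x ≤ 1/4 := by
      have := mul_le_mul hx12 hx12 hx0.le (by norm_num : (0:ℝ) ≤ 1/2)
      linarith
    have hx3 : x^3 ≤ x/4 := by
      have := mul_le_mul_of_nonneg_left hx2 hx0.le
      nlinarith [this]
    have h7 := mul_le_mul_of_nonneg_right hμx (pow_nonneg hx0.le 3)
    have h8 : μ * x * x^3 = μ * x^4 := by ring
    linarith [h7, h8.symm.le, hx0.le]
  set y := x - 4*μ*x^4 with hy
  have h4μnn : 0 ≤ 4*μ*x^4 := by positivity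
  have hyhalf : x/2 ≤ y := by rw [hy]; linarith
  have hy0 : 0 < y := by linarith
  have hyx : y ≤ x := by rw [hy]; linarith
  have hyIoo : y ∈ Ioo (-(π/2)) (π/2) := ⟨by linarith, by linarith⟩
  have hsiny := aux_sin_lb hy0 (by linarith : y ≤ 1/2)
  have hsinypos : 0 < Real.sin y := by linarith
  have hyarc : y ≤ arctan r⁻¹ := by linarith
  have htany : Real.tan y ≤ r⁻¹ := by
    rw [← Real.tan_arctan r⁻¹]
    exact Real.strictMonoOn_tan.monotoneOn hyIoo (Real.arctan_mem_Ioo _) hyarc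
  have hcosypos : 0 < Real.cos y := Real.cos_pos_of_mem_Ioo hyIoo
  have htanypos : 0 < Real.tan y := by rw [Real.tan_eq_sin_div_cos]; positivity
  have hrcoty : r ≤ Real.cos y / Real.sin y := by
    have h := inv_anti₀ htanypos htany
    rw [inv_inv] at h
    calc r ≤ (Real.tan y)⁻¹ := h
      _ = Real.cos y / Real.sin y := by rw [Real.tan_eq_sin_div_cos, inv_div]
  have hcoty : Real.cos y / Real.sin y - Real.cos x / Real.sin x
      = Real.sin (x - y) / (Real.sin y * Real.sin x) :=
    aux_cot_sub (ne_of_gt hsinypos) (ne_of_gt hsinxpos)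
  have hsinxy : Real.sin (x - y) ≤ 4*μ*x^4 := by
    have := Real.sin_le (show (0:ℝ) ≤ x - y by linarith)
    linarith
  have hsinnn : 0 ≤ Real.sin (x - y) :=
    Real.sin_nonneg_of_nonneg_of_le_pi (by linarith) (by linarith [Real.pi_gt_three])
  have hcotdiff : Real.cos y / Real.sin y - Real.cos x / Real.sin x ≤ 32*μ*x^2 := by
    rw [hcoty]
    have hsy : x/4 ≤ Real.sin y := by linarith
    have hden : x^2/8 ≤ Real.sin y * Real.sin x := by nlinarith
    calc Real.sin (x - y) / (Real.sin y * Real.sin x) ≤ (4*μ*x^4) / (x^2/8) :=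
          div_le_div₀ (by positivity) hsinxy (by positivity) hden
      _ = 32*μ*x^2 := by field_simp; ring
  rw [abs_le]
  have hA : 0 ≤ 32*μ*x^2 := by positivity
  constructor
  · linarith [hcot.1, hcotx, sq_nonneg x, hA]
  · linarith [hrcoty, hcotdiff, hcot.2, sq_nonneg x]
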